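/- Correctness of the two-pointer merge for constrained label pairing: given two finite lists of labels A = [(a₁ʳ,a₁ᵖ),…] sorted by increasing resource and B similarly, with both lists Pareto-optimal (increasing resource implies increasing profit), the maximum of aᵖ + bᵖ over pairs (a,b) ∈ A × B with aʳ + bʳ ≤ R can be computed by a single simultaneous sweep of A in increasing resource order and B in decreasing resource order; the sweep's output equals the true maximum. -/

import Mathlib

/-- A list of labels is Pareto-sorted if it is strictly increasing in resource and
strictly increasing in profit. -/
def ParetoSorted (L : List (ℝ × ℝ)) : Prop :=
  L.Chain' (fun x y => x.1 < y.1 ∧ x.2 < y.2)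

lemma pareto_mono (L : List (ℝ × ℝ)) (h : ParetoSorted L) :
    ∀ b ∈ L, ∀ b' ∈ L, b.1 ≤ b'.1 → b.2 ≤ b'.2 := by
  have hp : L.Pairwise (fun x y => x.1 < y.1 ∧ x.2 < y.2) := by
    haveI : IsTrans (ℝ × ℝ) (fun x y => x.1 < y.1 ∧ x.2 < y.2) :=
      ⟨fun a b c h1 h2 => ⟨h1.1.trans h2.1, h1.2.trans h2.2⟩⟩
    exact List.isChain_iff_pairwise.mp h
  clear h
  induction hp with
  | nil => simp
  | cons hhd htl ih =>
    intro b hb b' hb' hle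
    rcases List.mem_cons.mp hb with heq | hbm
    · rcases List.mem_cons.mp hb' with heq' | hbm'
      · rw [heq, heq']
      · rw [heq]; exact (hhd b' hbm').2.le
    · rcases List.mem_cons.mp hb' with heq' | hbm'
      · exfalso
        have := (hhd b hbm).1
        rw [← heq'] at this
        linarith
      · exact ih b hbm b' hbm' hle

lemma exists_max (P : ℝ × ℝ → Prop) :
    ∀ (B : List (ℝ × ℝ)), (∃ b ∈ B, P b) →
    ∃ m ∈ B, P m ∧ ∀ b' ∈ B, P b' → b'.1 ≤ m.1 := by
  intro B
  induction B with
  | nil => rintro ⟨b, hb, -⟩; cases hb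
  | cons hd tl ih =>
    rintro ⟨b, hb, hPb⟩
    by_cases htl : ∃ b ∈ tl, P b
    · obtain ⟨m, hm, hPm, hmax⟩ := ih htl
      by_cases hhd : P hd ∧ m.1 ≤ hd.1
      · refine ⟨hd, List.mem_cons_self, hhd.1, ?_⟩
        intro b' hb' hPb'
        rcases List.mem_cons.mp hb' with rfl | hb'
        · exact le_refl _
        · exact (hmax b' hb' hPb').trans hhd.2
      · refine ⟨m, List.mem_cons_of_mem _ hm, hPm, ?_⟩
        intro b' hb' hPb'
        rcases List.mem_cons.mp hb' with rfl | hb'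
        · by_contra hlt
          exact hhd ⟨hPb', (not_le.mp hlt).le⟩
        · exact hmax b' hb' hPb'
    · refine ⟨hd, List.mem_cons_self, ?_, ?_⟩
      · rcases List.mem_cons.mp hb with rfl | hb
        · exact hPb
        · exact absurd ⟨b, hb, hPb⟩ htl
      · intro b' hb' hPb'
        rcases List.mem_cons.mp hb' with rfl | hb'
        · exact le_refl _
        · exact absurd ⟨b', hb', hPb'⟩ htl

/-- Correctness of the two-pointer sweep: the maximum of aᵖ + bᵖ over feasible pairs
(aʳ + bʳ ≤ R) equals the maximum of the values recorded by the sweep, namely the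
values aᵖ + bᵖ where b is the feasible element of B of maximum resource for a. -/
theorem stmt_11 (A B : List (ℝ × ℝ)) (R : ℝ)
    (hA : ParetoSorted A) (hB : ParetoSorted B) :
    sSup {x : ℝ | ∃ a ∈ A, ∃ b ∈ B, a.1 + b.1 ≤ R ∧ x = a.2 + b.2} =
    sSup {x : ℝ | ∃ a ∈ A, ∃ b ∈ B, a.1 + b.1 ≤ R ∧
      (∀ b' ∈ B, a.1 + b'.1 ≤ R → b'.1 ≤ b.1) ∧ x = a.2 + b.2} := by
  set S1 : Set ℝ := {x : ℝ | ∃ a ∈ A, ∃ b ∈ B, a.1 + b.1 ≤ R ∧ x = a.2 + b.2} with hS1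
  set S2 : Set ℝ := {x : ℝ | ∃ a ∈ A, ∃ b ∈ B, a.1 + b.1 ≤ R ∧
      (∀ b' ∈ B, a.1 + b'.1 ≤ R → b'.1 ≤ b.1) ∧ x = a.2 + b.2} with hS2
  have hsub : S2 ⊆ S1 := by
    rintro x ⟨a, ha, b, hb, hfeas, -, hx⟩
    exact ⟨a, ha, b, hb, hfeas, hx⟩
  have hdom : ∀ x ∈ S1, ∃ y ∈ S2, x ≤ y := by
    rintro x ⟨a, ha, b, hb, hfeas, rfl⟩
    obtain ⟨m, hm, hPm, hmax⟩ := exists_max (fun b' => a.1 + b'.1 ≤ R) B ⟨b, hb, hfeas⟩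
    refine ⟨a.2 + m.2, ⟨a, ha, m, hm, hPm, hmax, rfl⟩, ?_⟩
    have := pareto_mono B hB b hb m hm (hmax b hb hfeas)
    linarith
  -- finiteness
  have hfin1 : S1.Finite := by
    have : S1 ⊆ (fun p : (ℝ × ℝ) × (ℝ × ℝ) => p.1.2 + p.2.2) ''
        ({a | a ∈ A} ×ˢ {b | b ∈ B}) := by
      rintro x ⟨a, ha, b, hb, -, rfl⟩
      exact ⟨⟨a, b⟩, ⟨ha, hb⟩, rfl⟩
    exact Set.Finite.subset (Set.Finite.image _ ((A.finite_toSet).prod (B.finite_toSet))) this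
  have hfin2 : S2.Finite := hfin1.subset hsub
  rcases Set.eq_empty_or_nonempty S1 with h1 | h1
  · have h2 : S2 = ∅ := Set.subset_eq_empty hsub h1
    rw [h1, h2]
  · have h2 : S2.Nonempty := by
      obtain ⟨x, hx⟩ := h1
      obtain ⟨y, hy, -⟩ := hdom x hx
      exact ⟨y, hy⟩
    apply le_antisymm
    · apply csSup_le h1
      intro x hx
      obtain ⟨y, hy, hxy⟩ := hdom x hx
      exact hxy.trans (le_csSup (hfin2.bddAbove) hy)
    · exact csSup_le_csSup (hfin1.bddAbove) h2 hsub
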